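/- Let G be a graph admitting an impression of the complete bipartite graph K_{n,n} of order 2, with n ≥ 2. Then G has a hole of length at least 2n. -/
import Mathlib


def InducedCycle {V : Type*} (G : SimpleGraph V) (n : ℕ) : Prop :=
  ∃ f : ZMod n → V, Function.Injective f ∧
    ∀ i j : ZMod n, G.Adj (f i) (f j) ↔ (j = i + 1 ∨ i = j + 1)

open Classical

noncomputable def impSucc {V : Type} (G : SimpleGraph V) {N : ℕ} (q w : ZMod N → V) : V → V :=
  fun x =>
    if hx : ∃ k, q k = x then
      (if G.Adj x (q (hx.choose + 1)) then q (hx.choose + 1) else w hx.choose)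
    else if hx' : ∃ k, w k = x then q (hx'.choose + 1) else x

lemma impSucc_q {V : Type} (G : SimpleGraph V) {N : ℕ} (q w : ZMod N → V)
    (hq : Function.Injective q) (k : ZMod N) :
    impSucc G q w (q k) = if G.Adj (q k) (q (k + 1)) then q (k + 1) else w k := by
  have hx : ∃ k', q k' = q k := ⟨k, rfl⟩
  have hck : hx.choose = k := hq hx.choose_spec
  simp only [impSucc]; rw [dif_pos hx, hck]

lemma impSucc_w {V : Type} (G : SimpleGraph V) {N : ℕ} (q w : ZMod N → V)
    (hw : Function.Injective w) (hne : ∀ k l, q k ≠ w l) (k : ZMod N) :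
    impSucc G q w (w k) = q (k + 1) := by
  have hx : ¬ ∃ k', q k' = w k := by rintro ⟨k', h⟩; exact hne k' k h
  have hx' : ∃ k', w k' = w k := ⟨k, rfl⟩
  have hck : hx'.choose = k := hw hx'.choose_spec
  simp only [impSucc]; rw [dif_neg hx, dif_pos hx', hck]

theorem impAux {V : Type} (G : SimpleGraph V) (N : ℕ) (hN : 2 ≤ N)
    (q w : ZMod N → V)
    (hq : Function.Injective q) (hw : Function.Injective w)
    (hne : ∀ k l, q k ≠ w l)
    (hqw : ∀ k, G.Adj (q k) (w k))
    (hwq : ∀ k, G.Adj (w k) (q (k + 1)))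
    (hqq : ∀ k l : ZMod N, l ≠ k + 1 → k ≠ l + 1 → ¬ G.Adj (q k) (q l))
    (hww : ∀ k l : ZMod N, ¬ G.Adj (w k) (w l))
    (hqw' : ∀ k l : ZMod N, k ≠ l → k ≠ l + 1 → ¬ G.Adj (q k) (w l)) :
    ∃ m : ℕ, N ≤ m ∧ InducedCycle G m := by
  haveI : NeZero N := ⟨by omega⟩
  set σ : V → V := impSucc G q w with hσdef
  set x0 : V := q 0 with hx0
  have hσq : ∀ k, σ (q k) = if G.Adj (q k) (q (k+1)) then q (k+1) else w k :=
    impSucc_q G q w hq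
  have hσw : ∀ k, σ (w k) = q (k+1) := impSucc_w G q w hw hne
  have hadj_succ : ∀ x : V, ((∃ k, x = q k) ∨ (∃ k, x = w k)) → G.Adj x (σ x) := by
    rintro x (⟨k, rfl⟩ | ⟨k, rfl⟩)
    · rw [hσq]; split_ifs with h
      · exact h
      · exact hqw k
    · rw [hσw]; exact hwq k
  have mem : ∀ s : ℕ, (∃ k, σ^[s] x0 = q k) ∨ (∃ k, σ^[s] x0 = w k) := by
    intro s; induction s with
    | zero => exact Or.inl ⟨0, rfl⟩
    | succ s ih =>
      rw [Function.iterate_succ_apply']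
      rcases ih with ⟨k, hk⟩ | ⟨k, hk⟩
      · rw [hk, hσq]; split_ifs
        · exact Or.inl ⟨k+1, rfl⟩
        · exact Or.inr ⟨k, rfl⟩
      · rw [hk, hσw]; exact Or.inl ⟨k+1, rfl⟩
  have step2 : ∀ k : ZMod N, ∃ d, 0 < d ∧ σ^[d] (q k) = q (k+1) := by
    intro k
    by_cases h : G.Adj (q k) (q (k+1))
    · exact ⟨1, one_pos, by rw [Function.iterate_one, hσq, if_pos h]⟩
    · refine ⟨2, two_pos, ?_⟩
      have h2 : σ^[2] (q k) = σ (σ (q k)) := rfl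
      rw [h2, hσq, if_neg h, hσw]
  have reach : ∀ j : ℕ, ∃ s, j ≤ s ∧ σ^[s] x0 = q (j : ZMod N) := by
    intro j; induction j with
    | zero => exact ⟨0, le_refl 0, by simp [hx0]⟩
    | succ j ih =>
      obtain ⟨s, hs, hqs⟩ := ih
      obtain ⟨d, hd, hds⟩ := step2 (j : ZMod N)
      refine ⟨d + s, by omega, ?_⟩
      rw [Function.iterate_add_apply, hqs, hds]
      push_cast
      ring_nf
  have hret : ∃ s, 0 < s ∧ σ^[s] x0 = x0 := by
    obtain ⟨s, hs, h⟩ := reach N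
    refine ⟨s, by omega, by rw [h, ZMod.natCast_self]⟩
  set m := Nat.find hret with hmdef
  obtain ⟨hm0, hmret⟩ : 0 < m ∧ σ^[m] x0 = x0 := Nat.find_spec hret
  have hmin : ∀ s, 0 < s → s < m → σ^[s] x0 ≠ x0 := by
    intro s h1 h2 h3
    exact Nat.find_min hret h2 ⟨h1, h3⟩
  have track : ∀ s : ℕ, ∃ u : ℕ, s ≤ u ∧ u ≤ 2*s ∧
      ((u % 2 = 0 ∧ σ^[s] x0 = q ((u/2 : ℕ) : ZMod N)) ∨
       (u % 2 = 1 ∧ σ^[s] x0 = w ((u/2 : ℕ) : ZMod N))) := by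
    intro s; induction s with
    | zero => exact ⟨0, le_refl 0, by omega, Or.inl ⟨rfl, by simp [hx0]⟩⟩
    | succ s ih =>
      obtain ⟨u, hu1, hu2, hcase⟩ := ih
      rcases hcase with ⟨hpar, hval⟩ | ⟨hpar, hval⟩
      · by_cases h : G.Adj (q ((u/2 : ℕ) : ZMod N)) (q (((u/2 : ℕ) : ZMod N) + 1))
        · refine ⟨u + 2, by omega, by omega, Or.inl ⟨by omega, ?_⟩⟩
          rw [Function.iterate_succ_apply', hval, hσq, if_pos h]
          have : ((u+2)/2 : ℕ) = u/2 + 1 := by omega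
          rw [this]; push_cast; ring_nf
        · refine ⟨u + 1, by omega, by omega, Or.inr ⟨by omega, ?_⟩⟩
          rw [Function.iterate_succ_apply', hval, hσq, if_neg h]
          have : ((u+1)/2 : ℕ) = u/2 := by omega
          rw [this]
      · refine ⟨u + 1, by omega, by omega, Or.inl ⟨by omega, ?_⟩⟩
        rw [Function.iterate_succ_apply', hval, hσw]
        have : ((u+1)/2 : ℕ) = u/2 + 1 := by omega
        rw [this]; push_cast; ring_nf
  have hNm : N ≤ m := by
    obtain ⟨u, hu1, hu2, hcase⟩ := track m
    rcases hcase with ⟨hpar, hval⟩ | ⟨hpar, hval⟩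
    · rw [hmret] at hval
      have h0 : ((u/2 : ℕ) : ZMod N) = 0 := hq hval.symm
      have hdvd : N ∣ u / 2 := (ZMod.natCast_eq_zero_iff _ _).mp h0
      obtain ⟨c, hc⟩ := hdvd
      rcases Nat.eq_zero_or_pos c with rfl | hcpos
      · omega
      · have : N ≤ N * c := Nat.le_mul_of_pos_right N hcpos
        omega
    · rw [hmret] at hval
      exact absurd hval (hne 0 _)
  haveI : NeZero m := ⟨by omega⟩
  haveI : Fact (1 < m) := ⟨by omega⟩
  set f : ZMod m → V := fun i => σ^[i.val] x0 with hfdef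
  have fsucc : ∀ i : ZMod m, f (i + 1) = σ (f i) := by
    intro i
    have e2 : σ (f i) = σ^[i.val + 1] x0 := (Function.iterate_succ_apply' σ i.val x0).symm
    have hiv : (i + 1).val = (i.val + 1) % m := by
      rw [ZMod.val_add, ZMod.val_one]
    have e1 : f (i+1) = σ^[(i.val + 1) % m] x0 := by rw [hfdef]; simp only []; rw [hiv]
    rw [e1, e2]
    by_cases h : i.val + 1 = m
    · rw [h, Nat.mod_self]
      simpa [h] using hmret.symm
    · have hlt : i.val + 1 < m := by have := ZMod.val_lt i; omega
      rw [Nat.mod_eq_of_lt hlt]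
  have fperiod : ∀ s t : ℕ, s ≤ t → t < m → σ^[s] x0 = σ^[t] x0 → s = t := by
    intro s t hst htm he
    by_contra hne'
    have h2 : σ^[(m - t) + s] x0 = x0 := by
      rw [Function.iterate_add_apply, he, ← Function.iterate_add_apply,
        Nat.sub_add_cancel htm.le]
      exact hmret
    exact hmin ((m - t) + s) (by omega) (by omega) h2
  have finj : Function.Injective f := by
    intro i j hij
    rcases le_total i.val j.val with h | h
    · exact ZMod.val_injective m (fperiod i.val j.val h (ZMod.val_lt j) hij)
    · exact (ZMod.val_injective m (fperiod j.val i.val h (ZMod.val_lt i) hij.symm)).symm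
  have memf : ∀ i : ZMod m, (∃ k, f i = q k) ∨ (∃ k, f i = w k) := fun i => mem i.val
  have claimW : ∀ (j : ZMod m) (k : ZMod N), f j = w k → ¬ G.Adj (q k) (q (k+1)) := by
    intro j k hjk
    rcases Nat.eq_zero_or_pos j.val with h0 | hpos
    · exfalso
      apply hne 0 k
      rw [← hjk, hfdef]
      simp only []
      rw [h0]
      simp [hx0]
    · obtain ⟨s, hs⟩ : ∃ s, j.val = s + 1 := ⟨j.val - 1, by omega⟩
      have hstep : f j = σ (σ^[s] x0) := by
        rw [hfdef]; simp only []; rw [hs, Function.iterate_succ_apply']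
      rw [hjk] at hstep
      rcases mem s with ⟨l, hl⟩ | ⟨l, hl⟩
      · rw [hl, hσq] at hstep
        split_ifs at hstep with hAdj
        · exact absurd hstep.symm (hne _ _)
        · have : k = l := hw hstep
          rw [this]; exact hAdj
      · rw [hl, hσw] at hstep
        exact absurd hstep.symm (hne _ _)
  refine ⟨m, hNm, f, finj, ?_⟩
  intro i j
  constructor
  · intro hAdj
    rcases memf i with ⟨k, hk⟩ | ⟨k, hk⟩ <;> rcases memf j with ⟨l, hl⟩ | ⟨l, hl⟩
    · -- q q
      rw [hk, hl] at hAdj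
      have hkl : l = k + 1 ∨ k = l + 1 := by
        by_contra hcon
        push_neg at hcon
        exact hqq k l hcon.1 hcon.2 hAdj
      rcases hkl with rfl | rfl
      · left
        apply finj
        rw [fsucc i, hk, hσq, if_pos hAdj, hl]
      · right
        apply finj
        rw [fsucc j, hl, hσq, if_pos hAdj.symm, hk]
    · -- q w
      rw [hk, hl] at hAdj
      have hkl : k = l ∨ k = l + 1 := by
        by_contra hcon
        push_neg at hcon
        exact hqw' k l hcon.1 hcon.2 hAdj
      rcases hkl with rfl | rfl
      · left
        apply finj
        rw [fsucc i, hk, hσq, if_neg (claimW j k hl), hl]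
      · right
        apply finj
        rw [fsucc j, hl, hσw, hk]
    · -- w q
      rw [hk, hl] at hAdj
      have hkl : l = k ∨ l = k + 1 := by
        by_contra hcon
        push_neg at hcon
        exact hqw' l k hcon.1 hcon.2 hAdj.symm
      rcases hkl with rfl | rfl
      · right
        apply finj
        rw [fsucc j, hl, hσq, if_neg (claimW i l hk), hk]
      · left
        apply finj
        rw [fsucc i, hk, hσw, hl]
    · rw [hk, hl] at hAdj
      exact absurd hAdj (hww k l)
  · rintro (rfl | rfl)
    · rw [fsucc i]
      exact hadj_succ (f i) (by rcases memf i with ⟨k, hk⟩ | ⟨k, hk⟩; exacts [Or.inl ⟨k, hk⟩, Or.inr ⟨k, hk⟩])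
    · rw [fsucc j]
      exact (hadj_succ (f j) (by rcases memf j with ⟨k, hk⟩ | ⟨k, hk⟩; exacts [Or.inl ⟨k, hk⟩, Or.inr ⟨k, hk⟩])).symm

/-- If `G` admits an impression of `K_{n,n}` of order two (`n ≥ 2`) — given by branch
vertices `a i`, `b j` forming a stable set, middle vertices `p i j` making each edge
`a i - p i j - b j` a path of length two, such that paths of edges with no common end are
disjoint and anticomplete — then `G` has a hole of length at least `2n`. -/
theorem stmt7 {V : Type} [Fintype V] (G : SimpleGraph V) (n : ℕ) (hn : 2 ≤ n)
    (a b : Fin n → V) (p : Fin n → Fin n → V)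
    (hinj : Function.Injective (Sum.elim a b : Fin n ⊕ Fin n → V))
    (hstable : ∀ i j : Fin n,
      ¬ G.Adj (a i) (a j) ∧ ¬ G.Adj (a i) (b j) ∧ ¬ G.Adj (b i) (b j))
    (hmid : ∀ i j : Fin n, G.Adj (a i) (p i j) ∧ G.Adj (p i j) (b j))
    (hsep : ∀ i j i' j' : Fin n, i ≠ i' → j ≠ j' →
      ∀ u ∈ ({a i, b j, p i j} : Set V), ∀ v ∈ ({a i', b j', p i' j'} : Set V),
        u ≠ v ∧ ¬ G.Adj u v) :
    ∃ m : ℕ, 2 * n ≤ m ∧ InducedCycle G m := by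
  haveI : NeZero n := ⟨by omega⟩
  haveI : NeZero (2*n) := ⟨by omega⟩
  haveI : Fact (1 < 2*n) := ⟨by omega⟩
  -- derived facts at Fin n level
  have hex : ∀ j : Fin n, ∃ j' : Fin n, j' ≠ j := by
    intro j
    by_cases h : j.val = 0
    · exact ⟨⟨1, by omega⟩, by simp [Fin.ext_iff, h]⟩
    · exact ⟨⟨0, by omega⟩, by simp [Fin.ext_iff]; omega⟩
  have hAp : ∀ i' i j : Fin n, i' ≠ i → a i' ≠ p i j ∧ ¬ G.Adj (a i') (p i j) := by
    intro i' i j hii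
    obtain ⟨j', hj'⟩ := hex j
    exact hsep i' j' i j hii hj' (a i') (by simp) (p i j) (by simp)
  have hBp : ∀ j' i j : Fin n, j' ≠ j → b j' ≠ p i j ∧ ¬ G.Adj (b j') (p i j) := by
    intro j' i j hjj
    obtain ⟨i', hi'⟩ := hex i
    exact hsep i' j' i j hi' hjj (b j') (by simp) (p i j) (by simp)
  have hPp : ∀ i j i' j' : Fin n, i ≠ i' → j ≠ j' →
      p i j ≠ p i' j' ∧ ¬ G.Adj (p i j) (p i' j') := by
    intro i j i' j' hii hjj
    exact hsep i j i' j' hii hjj (p i j) (by simp) (p i' j') (by simp)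
  have hPinj : ∀ i j i' j' : Fin n, p i j = p i' j' → i = i' ∧ j = j' := by
    intro i j i' j' h
    by_cases hii : i = i'
    · subst hii
      refine ⟨rfl, ?_⟩
      by_cases hjj : j = j'
      · exact hjj
      · exfalso
        have h1 := (hmid i j').2
        rw [← h] at h1
        exact (hBp j' i j (fun hc => hjj hc.symm)).2 h1.symm
    · exfalso
      by_cases hjj : j = j'
      · subst hjj
        have h1 := (hmid i' j).1
        rw [← h] at h1
        exact (hAp i' i j (fun hc => hii hc.symm)).2 h1
      · exact (hPp i j i' j' hii hjj).1 h
  have hPa : ∀ i j i' : Fin n, p i j ≠ a i' := by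
    intro i j i' h
    by_cases hii : i' = i
    · subst hii
      exact (hmid i' j).1.ne h.symm
    · exact (hAp i' i j hii).1 h.symm
  have hPb : ∀ i j j' : Fin n, p i j ≠ b j' := by
    intro i j j' h
    by_cases hjj : j' = j
    · subst hjj
      exact (hmid i j').2.ne h
    · exact (hBp j' i j hjj).1 h.symm
  have hab : ∀ i j : Fin n, a i ≠ b j := by
    intro i j h
    have := hinj (show Sum.elim a b (Sum.inl i) = Sum.elim a b (Sum.inr j) from h)
    simp at this
  have hainj : Function.Injective a := by
    intro i j h
    have := hinj (show Sum.elim a b (Sum.inl i) = Sum.elim a b (Sum.inl j) from h)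
    simpa using this
  have hbinj : Function.Injective b := by
    intro i j h
    have := hinj (show Sum.elim a b (Sum.inr i) = Sum.elim a b (Sum.inr j) from h)
    simpa using this
  -- ZMod n wrappers
  set ι : ZMod n → Fin n := fun x => ⟨x.val, x.val_lt⟩ with hι
  have hιinj : Function.Injective ι := by
    intro x y h
    exact ZMod.val_injective n (congrArg Fin.val h)
  set A : ZMod n → V := fun x => a (ι x) with hA
  set B : ZMod n → V := fun x => b (ι x) with hB
  set P : ZMod n → ZMod n → V := fun x y => p (ι x) (ι y) with hP
  -- generic cast равenstvo lemma
  have castEq : ∀ x y : ℕ, x < n → y ≤ n →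
      (((x:ℕ) : ZMod n) = ((y:ℕ) : ZMod n) ↔ (x = y ∨ (x = 0 ∧ y = n))) := by
    intro x y hx hy
    rw [ZMod.natCast_eq_natCast_iff', Nat.mod_eq_of_lt hx]
    by_cases hyn : y < n
    · rw [Nat.mod_eq_of_lt hyn]; omega
    · have : y = n := by omega
      subst this
      rw [Nat.mod_self]; omega
  set t : ZMod (2*n) → ZMod n := fun k => ((k.val / 2 : ℕ) : ZMod n) with ht
  have htlt : ∀ k : ZMod (2*n), k.val / 2 < n := by
    intro k; have := ZMod.val_lt k; omega
  have tEq : ∀ k l : ZMod (2*n), t k = t l ↔ k.val/2 = l.val/2 := by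
    intro k l
    rw [ht]
    simp only []
    rw [castEq _ _ (htlt k) (le_of_lt (htlt l))]
    have := htlt l
    omega
  have tSuccEq : ∀ k l : ZMod (2*n),
      t k = t l + 1 ↔ (k.val/2 = l.val/2 + 1 ∨ (k.val/2 = 0 ∧ l.val/2 = n - 1)) := by
    intro k l
    have hcast : t l + 1 = ((l.val/2 + 1 : ℕ) : ZMod n) := by
      rw [ht]; push_cast; ring
    rw [hcast, ht]
    simp only []
    rw [castEq _ _ (htlt k) (by have := htlt l; omega)]
    have := htlt l
    omega
  have hvalsucc : ∀ k : ZMod (2*n), (k+1).val = (k.val + 1) % (2*n) := by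
    intro k
    rw [ZMod.val_add, ZMod.val_one]
  have succEq : ∀ k l : ZMod (2*n),
      k = l + 1 ↔ (k.val = l.val + 1 ∨ (k.val = 0 ∧ l.val = 2*n - 1)) := by
    intro k l
    have hl2 := ZMod.val_lt l
    have hk2 := ZMod.val_lt k
    constructor
    · rintro rfl
      rw [hvalsucc]
      by_cases h : l.val + 1 < 2*n
      · left; rw [Nat.mod_eq_of_lt h]
      · right
        have h2 : l.val + 1 = 2*n := by omega
        rw [h2, Nat.mod_self]
        omega
    · intro h
      apply ZMod.val_injective
      rw [hvalsucc]
      rcases h with h | ⟨h1, h2⟩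
      · rw [Nat.mod_eq_of_lt (by omega), h]
      · rw [h1, h2]
        have h3 : (2*n - 1) + 1 = 2*n := by omega
        rw [h3, Nat.mod_self]
  have valEq : ∀ k l : ZMod (2*n), k.val = l.val → k = l := fun k l h =>
    ZMod.val_injective _ h
  -- the two families
  set q : ZMod (2*n) → V := fun k => if k.val % 2 = 0 then P (t k) (t k) else P (t k + 1) (t k)
    with hqdef
  set w : ZMod (2*n) → V := fun k => if k.val % 2 = 0 then B (t k) else A (t k + 1) with hwdef
  have hq0 : ∀ k : ZMod (2*n), k.val % 2 = 0 → q k = P (t k) (t k) := by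
    intro k h; rw [hqdef]; simp only []; rw [if_pos h]
  have hq1 : ∀ k : ZMod (2*n), k.val % 2 = 1 → q k = P (t k + 1) (t k) := by
    intro k h; rw [hqdef]; simp only []; rw [if_neg (by omega)]
  have hw0 : ∀ k : ZMod (2*n), k.val % 2 = 0 → w k = B (t k) := by
    intro k h; rw [hwdef]; simp only []; rw [if_pos h]
  have hw1 : ∀ k : ZMod (2*n), k.val % 2 = 1 → w k = A (t k + 1) := by
    intro k h; rw [hwdef]; simp only []; rw [if_neg (by omega)]
  -- successor structure
  have R1 : ∀ k : ZMod (2*n), k.val % 2 = 0 → (k+1).val % 2 = 1 ∧ t (k+1) = t k := by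
    intro k h
    have hk2 := ZMod.val_lt k
    have h1 : (k+1).val = k.val + 1 := by
      rw [hvalsucc, Nat.mod_eq_of_lt (by omega)]
    constructor
    · omega
    · rw [ht]; simp only []
      congr 1
      omega
  have R2 : ∀ k : ZMod (2*n), k.val % 2 = 1 → (k+1).val % 2 = 0 ∧ t (k+1) = t k + 1 := by
    intro k h
    have hk2 := ZMod.val_lt k
    by_cases hvm : k.val = 2*n - 1
    · have h1 : (k+1).val = 0 := by
        rw [hvalsucc]
        have : k.val + 1 = 2*n := by omega
        rw [this, Nat.mod_self]
      constructor
      · rw [h1]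
      · rw [tSuccEq]
        right
        rw [h1, hvm]
        omega
    · have h1 : (k+1).val = k.val + 1 := by
        rw [hvalsucc, Nat.mod_eq_of_lt (by omega)]
      constructor
      · omega
      · rw [tSuccEq, h1]
        left
        omega
  -- hypotheses of impAux
  have hPinj' : ∀ i j i' j' : ZMod n, P i j = P i' j' → i = i' ∧ j = j' := by
    intro i j i' j' h
    obtain ⟨h1, h2⟩ := hPinj _ _ _ _ h
    exact ⟨hιinj h1, hιinj h2⟩
  have hqinj : Function.Injective q := by
    intro k l h
    have hk2 := ZMod.val_lt k
    have hl2 := ZMod.val_lt l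
    apply valEq
    rcases Nat.mod_two_eq_zero_or_one k.val with hk | hk <;>
      rcases Nat.mod_two_eq_zero_or_one l.val with hl | hl
    · rw [hq0 k hk, hq0 l hl] at h
      have := (hPinj' _ _ _ _ h).2
      rw [tEq] at this
      omega
    · rw [hq0 k hk, hq1 l hl] at h
      obtain ⟨h1, h2⟩ := hPinj' _ _ _ _ h
      rw [tSuccEq] at h1
      rw [tEq] at h2
      omega
    · rw [hq1 k hk, hq0 l hl] at h
      obtain ⟨h1, h2⟩ := hPinj' _ _ _ _ h
      rw [eq_comm, tSuccEq] at h1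
      rw [tEq] at h2
      omega
    · rw [hq1 k hk, hq1 l hl] at h
      have := (hPinj' _ _ _ _ h).2
      rw [tEq] at this
      omega
  have hwinj : Function.Injective w := by
    intro k l h
    have hk2 := ZMod.val_lt k
    have hl2 := ZMod.val_lt l
    apply valEq
    rcases Nat.mod_two_eq_zero_or_one k.val with hk | hk <;>
      rcases Nat.mod_two_eq_zero_or_one l.val with hl | hl
    · rw [hw0 k hk, hw0 l hl] at h
      have : t k = t l := hιinj (hbinj h)
      rw [tEq] at this
      omega
    · rw [hw0 k hk, hw1 l hl] at h
      exact absurd h.symm (hab _ _)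
    · rw [hw1 k hk, hw0 l hl] at h
      exact absurd h (hab _ _)
    · rw [hw1 k hk, hw1 l hl] at h
      have : t k + 1 = t l + 1 := hιinj (hainj h)
      have h2 : t k = t l := by
        have := add_right_cancel this
        exact this
      rw [tEq] at h2
      omega
  have hne : ∀ k l : ZMod (2*n), q k ≠ w l := by
    intro k l
    rcases Nat.mod_two_eq_zero_or_one k.val with hk | hk <;>
      rcases Nat.mod_two_eq_zero_or_one l.val with hl | hl
    · rw [hq0 k hk, hw0 l hl]; exact hPb _ _ _
    · rw [hq0 k hk, hw1 l hl]; exact hPa _ _ _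
    · rw [hq1 k hk, hw0 l hl]; exact hPb _ _ _
    · rw [hq1 k hk, hw1 l hl]; exact hPa _ _ _
  have hqw : ∀ k : ZMod (2*n), G.Adj (q k) (w k) := by
    intro k
    rcases Nat.mod_two_eq_zero_or_one k.val with hk | hk
    · rw [hq0 k hk, hw0 k hk]; exact (hmid _ _).2
    · rw [hq1 k hk, hw1 k hk]; exact (hmid _ _).1.symm
  have hwq : ∀ k : ZMod (2*n), G.Adj (w k) (q (k + 1)) := by
    intro k
    rcases Nat.mod_two_eq_zero_or_one k.val with hk | hk
    · obtain ⟨h1, h2⟩ := R1 k hk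
      rw [hw0 k hk, hq1 (k+1) h1, h2]
      exact (hmid _ _).2.symm
    · obtain ⟨h1, h2⟩ := R2 k hk
      rw [hw1 k hk, hq0 (k+1) h1, h2]
      exact (hmid _ _).1
  have hqq : ∀ k l : ZMod (2*n), l ≠ k + 1 → k ≠ l + 1 → ¬ G.Adj (q k) (q l) := by
    intro k l hlk hkl
    by_cases hkeq : k = l
    · subst hkeq; exact G.irrefl
    have hk2 := ZMod.val_lt k
    have hl2 := ZMod.val_lt l
    have hvne : k.val ≠ l.val := fun h => hkeq (valEq _ _ h)
    rcases Nat.mod_two_eq_zero_or_one k.val with hk | hk <;>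
      rcases Nat.mod_two_eq_zero_or_one l.val with hl | hl
    · rw [hq0 k hk, hq0 l hl]
      refine (hPp _ _ _ _ ?_ ?_).2 <;>
      · intro hc
        have := hιinj hc
        rw [tEq] at this
        omega
    · rw [hq0 k hk, hq1 l hl]
      refine (hPp _ _ _ _ ?_ ?_).2
      · intro hc
        have := hιinj hc
        rw [tSuccEq] at this
        apply hkl
        rw [succEq]
        omega
      · intro hc
        have := hιinj hc
        rw [tEq] at this
        apply hlk
        rw [succEq]
        omega
    · rw [hq1 k hk, hq0 l hl]
      refine (hPp _ _ _ _ ?_ ?_).2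
      · intro hc
        have := hιinj hc
        rw [eq_comm, tSuccEq] at this
        apply hlk
        rw [succEq]
        omega
      · intro hc
        have := hιinj hc
        rw [tEq] at this
        apply hkl
        rw [succEq]
        omega
    · rw [hq1 k hk, hq1 l hl]
      refine (hPp _ _ _ _ ?_ ?_).2
      · intro hc
        have h2 : t k = t l := by
          have := hιinj hc
          exact add_right_cancel this
        rw [tEq] at h2
        omega
      · intro hc
        have := hιinj hc
        rw [tEq] at this
        omega
  have hww : ∀ k l : ZMod (2*n), ¬ G.Adj (w k) (w l) := by
    intro k l
    rcases Nat.mod_two_eq_zero_or_one k.val with hk | hk <;>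
      rcases Nat.mod_two_eq_zero_or_one l.val with hl | hl
    · rw [hw0 k hk, hw0 l hl]; exact (hstable _ _).2.2
    · rw [hw0 k hk, hw1 l hl]
      exact fun h => (hstable _ _).2.1 h.symm
    · rw [hw1 k hk, hw0 l hl]; exact (hstable _ _).2.1
    · rw [hw1 k hk, hw1 l hl]; exact (hstable _ _).1
  have hqw' : ∀ k l : ZMod (2*n), k ≠ l → k ≠ l + 1 → ¬ G.Adj (q k) (w l) := by
    intro k l hkl hkl1
    have hk2 := ZMod.val_lt k
    have hl2 := ZMod.val_lt l
    have hvne : k.val ≠ l.val := fun h => hkl (valEq _ _ h)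
    rcases Nat.mod_two_eq_zero_or_one k.val with hk | hk <;>
      rcases Nat.mod_two_eq_zero_or_one l.val with hl | hl
    · rw [hq0 k hk, hw0 l hl]
      intro hadj
      refine (hBp (ι (t l)) (ι (t k)) (ι (t k)) ?_).2 hadj.symm
      intro hc
      have := hιinj hc
      rw [eq_comm, tEq] at this
      omega
    · rw [hq0 k hk, hw1 l hl]
      intro hadj
      refine (hAp (ι (t l + 1)) (ι (t k)) (ι (t k)) ?_).2 hadj.symm
      intro hc
      have := hιinj hc
      rw [eq_comm, tSuccEq] at this
      apply hkl1
      rw [succEq]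
      omega
    · rw [hq1 k hk, hw0 l hl]
      intro hadj
      refine (hBp (ι (t l)) (ι (t k + 1)) (ι (t k)) ?_).2 hadj.symm
      intro hc
      have := hιinj hc
      rw [eq_comm, tEq] at this
      apply hkl1
      rw [succEq]
      omega
    · rw [hq1 k hk, hw1 l hl]
      intro hadj
      refine (hAp (ι (t l + 1)) (ι (t k + 1)) (ι (t k)) ?_).2 hadj.symm
      intro hc
      have h2 : t l = t k := add_right_cancel (hιinj hc)
      rw [eq_comm, tEq] at h2
      omega
  exact impAux G (2*n) (by omega) q w hqinj hwinj hne hqw hwq hqq hww hqw'
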